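/- Let ρ: SL(2,Z) → GL(d,C) be an irreducible representation of dimension d ≤ 4 such that the eigenvalues of ρ(T) are e^{2πi r_1},...,e^{2πi r_d} for real numbers r_j. Then d divides 12(r_1 + ··· + r_d). -/

import Mathlib

set_option autoImplicit false
set_option maxHeartbeats 1600000

open Matrix MatrixGroups Complex Polynomial

/-- Irreducibility: the only invariant subspaces of `ℂ^d` are `0` and `ℂ^d`. -/
def RepIrreducible {d : ℕ} (ρ : SL(2,ℤ) →* GL (Fin d) ℂ) : Prop :=
  ∀ U : Submodule ℂ (Fin d → ℂ),
    (∀ γ : SL(2,ℤ), ∀ v ∈ U, (ρ γ).val.mulVec v ∈ U) → U = ⊥ ∨ U = ⊤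

namespace SL2Aux
open ModularGroup Subgroup Module

/-! ### Generation of `SL(2,ℤ)` by `S` and `T` -/

lemma mem_closure_S_T (g : SL(2,ℤ)) :
    g ∈ Subgroup.closure ({S, T} : Set SL(2,ℤ)) := by
  set H := Subgroup.closure ({S, T} : Set SL(2,ℤ)) with hH
  have hS : S ∈ H := Subgroup.subset_closure (by simp)
  have hT : T ∈ H := Subgroup.subset_closure (by simp)
  have hTz : ∀ n : ℤ, T ^ n ∈ H := fun n => zpow_mem hT n
  suffices h : ∀ n : ℕ, ∀ g : SL(2,ℤ), (g 1 0).natAbs = n → g ∈ H by exact h _ g rfl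
  intro n
  induction n using Nat.strong_induction_on with
  | _ n ih =>
    intro g hg
    rcases eq_or_ne (g 1 0) 0 with hc | hc
    · clear hg
      have hdet : g 0 0 * g 1 1 - g 0 1 * g 1 0 = 1 := by
        have := g.2; rwa [Matrix.det_fin_two] at this
      rw [hc, mul_zero, sub_zero] at hdet
      rcases Int.mul_eq_one_iff_eq_one_or_neg_one.mp hdet with ⟨ha, hd⟩ | ⟨ha, hd⟩
      · have : g = T ^ (g 0 1) := by
          ext i j
          fin_cases i <;> fin_cases j <;>
            simp [coe_T_zpow, ha, hd, hc]
        rw [this]; exact hTz _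
      · have : g = S * S * T ^ (-(g 0 1)) := by
          ext i j
          have h2 : ((S * S * T ^ (-(g 0 1))) : SL(2,ℤ)).1
              = (S.1 * S.1) * (T ^ (-(g 0 1))).1 := by
            simp [Matrix.SpecialLinearGroup.coe_mul]
          fin_cases i <;> fin_cases j <;>
            · show g.1 _ _ = _
              rw [h2, S_mul_S_eq, coe_T_zpow]
              simp [ha, hd, hc]
        rw [this]
        exact mul_mem (mul_mem hS hS) (hTz _)
    · set c := g 1 0 with hc'
      set q := g 0 0 / c with hq
      set g' := S * (T ^ (-q) * g) with hg'
      have key : g' 1 0 = g 0 0 % c := by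
        show ((S * (T ^ (-q) * g)) : SL(2,ℤ)).1 1 0 = _
        rw [Matrix.SpecialLinearGroup.coe_mul, Matrix.SpecialLinearGroup.coe_mul, coe_T_zpow,
          coe_S]
        rw [Matrix.mul_apply, Fin.sum_univ_two]
        simp [Matrix.mul_apply, Fin.sum_univ_two]
        rw [Int.emod_def, hq]
        ring
      have hlt : (g' 1 0).natAbs < n := by
        rw [key, ← hg]
        have h1 : 0 ≤ g 0 0 % c := Int.emod_nonneg _ hc
        have h2 : g 0 0 % c < |c| := Int.emod_lt_abs _ hc
        have := Int.natAbs_lt_natAbs_of_nonneg_of_lt h1 h2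
        rwa [Int.natAbs_abs] at this
      have hg'H : g' ∈ H := ih _ hlt g' rfl
      have : g = T ^ q * (S⁻¹ * g') := by rw [hg']; group
      rw [this]
      exact mul_mem (hTz q) (mul_mem (inv_mem hS) hg'H)

/-! ### Relations -/

lemma coe_S_inv : (S⁻¹ : SL(2,ℤ)).1 = !![0, 1; -1, 0] := by
  simp [Matrix.SpecialLinearGroup.SL2_inv_expl, coe_S]
  ext i j
  fin_cases i <;> fin_cases j <;> rfl

lemma R_cube : (T * S⁻¹ : SL(2,ℤ)) ^ 3 = 1 := by
  have hR : ((T * S⁻¹ : SL(2,ℤ))).1 = !![(-1:ℤ), 1; -1, 0] := by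
    rw [show ((T * S⁻¹ : SL(2,ℤ))).1 = T.1 * (S⁻¹ : SL(2,ℤ)).1 from rfl, coe_T, coe_S_inv]
    norm_num [Matrix.mul_fin_two]
  ext i j
  have h3 : ((T * S⁻¹ : SL(2,ℤ)) ^ 3).1
      = !![(-1:ℤ), 1; -1, 0] * (!![(-1:ℤ), 1; -1, 0] * !![(-1:ℤ), 1; -1, 0]) := by
    rw [pow_succ, pow_succ, pow_one]
    rw [show ((T * S⁻¹ : SL(2,ℤ)) * (T * S⁻¹) * (T * S⁻¹)).1
      = ((T * S⁻¹ : SL(2,ℤ))).1 * ((T * S⁻¹ : SL(2,ℤ))).1 * ((T * S⁻¹ : SL(2,ℤ))).1 from rfl,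
      hR, mul_assoc]
  rw [show (((T * S⁻¹ : SL(2,ℤ)) ^ 3) : SL(2,ℤ)) i j = (((T * S⁻¹ : SL(2,ℤ)) ^ 3)).1 i j from rfl,
    h3]
  fin_cases i <;> fin_cases j <;>
    norm_num [Matrix.mul_fin_two, Matrix.SpecialLinearGroup.coe_one]

lemma S_sq : (S * S : SL(2,ℤ)) = -1 := by
  ext i j
  fin_cases i <;> fin_cases j <;>
    simp [coe_S, Matrix.mul_apply, Fin.sum_univ_two, Matrix.SpecialLinearGroup.coe_mul]

/-! ### Representation generalities -/

variable {d : ℕ} (ρ : SL(2,ℤ) →* GL (Fin d) ℂ)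

lemma coe_rho_mul (x y : SL(2,ℤ)) : (ρ (x * y)).val = (ρ x).val * (ρ y).val := by
  rw [_root_.map_mul]; rfl

lemma coe_rho_one : (ρ (1 : SL(2,ℤ))).val = 1 := by rw [_root_.map_one]; rfl

lemma eig_common (hρ : RepIrreducible ρ) (v : Fin d → ℂ) (hv : v ≠ 0)
    (hSv : ∃ a : ℂ, (ρ S).val.mulVec v = a • v)
    (hTv : ∃ b : ℂ, (ρ T).val.mulVec v = b • v) : d = 1 := by
  have hgen : ∀ γ : SL(2,ℤ), ∃ a : ℂ, (ρ γ).val.mulVec v = a • v := by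
    intro γ
    have h := mem_closure_S_T γ
    induction h using Subgroup.closure_induction with
    | mem x hx =>
      rcases hx with h | h
      · subst h; exact hSv
      · rw [Set.mem_singleton_iff] at h; subst h; exact hTv
    | one => exact ⟨1, by rw [coe_rho_one, Matrix.one_mulVec, one_smul]⟩
    | mul x y hx hy ihx ihy =>
      obtain ⟨a, ha⟩ := ihx
      obtain ⟨b, hb⟩ := ihy
      refine ⟨a * b, ?_⟩
      rw [coe_rho_mul, ← Matrix.mulVec_mulVec, hb, Matrix.mulVec_smul, ha, smul_smul, mul_comm]
    | inv x hx ihx =>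
      obtain ⟨a, ha⟩ := ihx
      have hinv : (ρ x⁻¹).val.mulVec ((ρ x).val.mulVec v) = v := by
        rw [Matrix.mulVec_mulVec, ← coe_rho_mul, inv_mul_cancel, coe_rho_one,
          Matrix.one_mulVec]
      have ha0 : a ≠ 0 := by
        intro h0
        rw [h0, zero_smul] at ha
        rw [ha, Matrix.mulVec_zero] at hinv
        exact hv hinv.symm
      refine ⟨a⁻¹, ?_⟩
      rw [ha, Matrix.mulVec_smul] at hinv
      calc (ρ x⁻¹).val.mulVec v = a⁻¹ • (a • (ρ x⁻¹).val.mulVec v) := by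
            rw [smul_smul, inv_mul_cancel₀ ha0, one_smul]
        _ = a⁻¹ • v := by rw [hinv]
  have hU := hρ (Submodule.span ℂ {v}) ?_
  · rcases hU with h | h
    · exfalso
      have : v ∈ (⊥ : Submodule ℂ (Fin d → ℂ)) := h ▸ Submodule.mem_span_singleton_self v
      exact hv (Submodule.mem_bot ℂ |>.mp this)
    · have h1 : Module.finrank ℂ (Submodule.span ℂ ({v} : Set (Fin d → ℂ))) = 1 :=
        finrank_span_singleton hv
      rw [h] at h1
      simpa using h1
  · intro γ w hw
    obtain ⟨a, ha⟩ := hgen γ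
    obtain ⟨c, hc⟩ := Submodule.mem_span_singleton.mp hw
    rw [← hc, Matrix.mulVec_smul, ha, smul_smul]
    exact Submodule.mem_span_singleton.mpr ⟨c * a, rfl⟩

lemma schur_neg_one (hρ : RepIrreducible ρ) :
    (ρ (-1 : SL(2,ℤ))).val = 1 ∨ (ρ (-1 : SL(2,ℤ))).val = -1 := by
  set M := (ρ (-1 : SL(2,ℤ))).val with hM
  have hM2 : M * M = 1 := by
    rw [hM, ← coe_rho_mul, neg_one_mul, neg_neg, coe_rho_one]
  have hcomm : ∀ γ : SL(2,ℤ), M * (ρ γ).val = (ρ γ).val * M := by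
    intro γ
    rw [hM, ← coe_rho_mul, ← coe_rho_mul, neg_one_mul, mul_neg_one]
  have hU := hρ (Module.End.eigenspace (Matrix.mulVecLin M) 1) ?_
  · rcases hU with h | h
    · right
      ext i j
      have hv : ∀ v : Fin d → ℂ, M.mulVec v = -v := by
        intro v
        have hmem : v + M.mulVec v ∈ Module.End.eigenspace (Matrix.mulVecLin M) 1 := by
          rw [Module.End.mem_eigenspace_iff, one_smul]
          simp only [Matrix.mulVecLin_apply]
          rw [Matrix.mulVec_add]
          rw [show M.mulVec (M.mulVec v) = v by
            rw [Matrix.mulVec_mulVec, hM2, Matrix.one_mulVec]]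
          abel
        rw [h, Submodule.mem_bot] at hmem
        linear_combination (norm := module) hmem
      have h2 := congrFun (hv (Pi.single j 1)) i
      simpa [Matrix.mulVec_single, Pi.single_apply, eq_comm, Matrix.one_apply] using h2
    · left
      ext i j
      have hv : ∀ v : Fin d → ℂ, M.mulVec v = v := by
        intro v
        have hmem : v ∈ Module.End.eigenspace (Matrix.mulVecLin M) 1 := h ▸ Submodule.mem_top
        rw [Module.End.mem_eigenspace_iff, one_smul] at hmem
        simpa using hmem
      have h2 := congrFun (hv (Pi.single j 1)) i
      simpa [Matrix.mulVec_single, Pi.single_apply, eq_comm, Matrix.one_apply] using h2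
  · intro γ v hv
    rw [Module.End.mem_eigenspace_iff, one_smul] at hv ⊢
    simp only [Matrix.mulVecLin_apply] at hv ⊢
    rw [Matrix.mulVec_mulVec, hcomm γ, ← Matrix.mulVec_mulVec, hv]

/-! ### Eigenspace decompositions -/

lemma isInternal_eig {k : ℕ} (A : Matrix (Fin d) (Fin d) ℂ) (μ : Fin k → ℂ)
    (hinj : Function.Injective μ)
    (hsup : ⨆ i, Module.End.eigenspace (Matrix.mulVecLin A) (μ i) = ⊤) :
    DirectSum.IsInternal (fun i => Module.End.eigenspace (Matrix.mulVecLin A) (μ i)) := by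
  apply DirectSum.isInternal_submodule_of_iSupIndep_of_iSup_eq_top _ hsup
  exact (Module.End.eigenspaces_iSupIndep (Matrix.mulVecLin A)).comp hinj

lemma finrank_sum_eig {k : ℕ} (A : Matrix (Fin d) (Fin d) ℂ) (μ : Fin k → ℂ)
    (hinj : Function.Injective μ)
    (hsup : ⨆ i, Module.End.eigenspace (Matrix.mulVecLin A) (μ i) = ⊤) :
    ∑ i, Module.finrank ℂ (Module.End.eigenspace (Matrix.mulVecLin A) (μ i)) = d := by
  have h := isInternal_eig A μ hinj hsup
  classical
  let b := h.collectedBasis (fun i => Module.finBasis ℂ _)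
  have hc := Module.finrank_eq_card_basis b
  simp only [Module.finrank_fin_fun] at hc
  rw [eq_comm]
  conv_lhs => rw [hc]
  rw [Fintype.card_sigma]
  simp

lemma det_eq_prod_eig {k : ℕ} (A : Matrix (Fin d) (Fin d) ℂ) (μ : Fin k → ℂ)
    (hinj : Function.Injective μ)
    (hsup : ⨆ i, Module.End.eigenspace (Matrix.mulVecLin A) (μ i) = ⊤) :
    A.det = ∏ i, μ i ^ Module.finrank ℂ (Module.End.eigenspace (Matrix.mulVecLin A) (μ i)) := by
  have h := isInternal_eig A μ hinj hsup
  classical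
  let b := h.collectedBasis (fun i => Module.finBasis ℂ _)
  have hdiag : LinearMap.toMatrix b b (Matrix.mulVecLin A)
      = Matrix.diagonal (fun p => μ p.1) := by
    ext p q
    rw [LinearMap.toMatrix_apply]
    have hmem := h.collectedBasis_mem (fun i => Module.finBasis ℂ _) q
    have heig : Matrix.mulVecLin A (b q) = μ q.1 • b q :=
      Module.End.mem_eigenspace_iff.mp hmem
    rw [heig, _root_.map_smul, Basis.repr_self]
    rcases eq_or_ne p q with rfl | hpq
    · simp [Matrix.diagonal_apply_eq]
    · simp [Matrix.diagonal_apply_ne _ hpq, Finsupp.single_apply, Ne.symm hpq,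
        (show q ≠ p from Ne.symm hpq)]
  have hdet : A.det = LinearMap.det (Matrix.mulVecLin A) := (LinearMap.det_toLin' A).symm
  rw [hdet, ← LinearMap.det_toMatrix b, hdiag, Matrix.det_diagonal]
  rw [show (Finset.univ : Finset ((i : Fin k) ×
      Fin (Module.finrank ℂ (Module.End.eigenspace (Matrix.mulVecLin A) (μ i)))))
      = Finset.univ.sigma (fun _ => Finset.univ) from rfl,
    Finset.prod_sigma]
  simp

lemma sup_eig_sq (A : Matrix (Fin d) (Fin d) ℂ) (ε α : ℂ) (hA : A * A = ε • 1)
    (hα : α ^ 2 = ε) (hα0 : α ≠ 0) :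
    ⨆ i : Fin 2, Module.End.eigenspace (Matrix.mulVecLin A) (![α, -α] i) = ⊤ := by
  rw [eq_top_iff]
  intro v _
  have hA2 : ∀ w : Fin d → ℂ, A.mulVec (A.mulVec w) = ε • w := by
    intro w
    rw [Matrix.mulVec_mulVec, hA, Matrix.smul_mulVec, Matrix.one_mulVec]
  have h0 : (2:ℂ)⁻¹ • (v + α⁻¹ • A.mulVec v)
      ∈ Module.End.eigenspace (Matrix.mulVecLin A) α := by
    rw [Module.End.mem_eigenspace_iff]
    simp only [Matrix.mulVecLin_apply, Matrix.mulVec_smul, Matrix.mulVec_add]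
    rw [hA2]
    have : ε • v = (α * α) • v := by rw [← hα]; ring_nf
    rw [this]
    match_scalars <;> field_simp
  have h1 : (2:ℂ)⁻¹ • (v - α⁻¹ • A.mulVec v)
      ∈ Module.End.eigenspace (Matrix.mulVecLin A) (-α) := by
    rw [Module.End.mem_eigenspace_iff]
    simp only [Matrix.mulVecLin_apply, Matrix.mulVec_smul, Matrix.mulVec_sub]
    rw [hA2]
    have : ε • v = (α * α) • v := by rw [← hα]; ring_nf
    rw [this]
    match_scalars <;> field_simp <;> ring
  have hv : v = (2:ℂ)⁻¹ • (v + α⁻¹ • A.mulVec v) + (2:ℂ)⁻¹ • (v - α⁻¹ • A.mulVec v) := by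
    module
  rw [hv]
  exact Submodule.add_mem _
    (Submodule.mem_iSup_of_mem 0 h0)
    (Submodule.mem_iSup_of_mem 1 h1)

lemma sup_eig_cube (B : Matrix (Fin d) (Fin d) ℂ) (ω : ℂ) (hB : B * B * B = 1)
    (hω : ω ^ 3 = 1) (hsum : 1 + ω + ω ^ 2 = 0) :
    ⨆ i : Fin 3, Module.End.eigenspace (Matrix.mulVecLin B) (![1, ω, ω^2] i) = ⊤ := by
  rw [eq_top_iff]
  intro v _
  set w := B.mulVec v with hw
  set w2 := B.mulVec w with hw2
  have hB3 : B.mulVec w2 = v := by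
    rw [hw2, hw, Matrix.mulVec_mulVec, Matrix.mulVec_mulVec, hB, Matrix.one_mulVec]
  have key : ∀ ζ : ℂ, ζ ^ 3 = 1 →
      v + ζ^2 • w + ζ • w2 ∈ Module.End.eigenspace (Matrix.mulVecLin B) ζ := by
    intro ζ hζ
    rw [Module.End.mem_eigenspace_iff]
    simp only [Matrix.mulVecLin_apply, Matrix.mulVec_add, Matrix.mulVec_smul]
    rw [← hw, ← hw2, hB3]
    have h2 : (ζ : ℂ) ^ 3 • w = (1:ℂ) • w := by rw [hζ]
    have : ζ • (v + ζ^2 • w + ζ • w2) = ζ • v + ζ^3 • w + ζ^2 • w2 := by module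
    rw [this, h2]
    module
  have hω2 : (ω^2) ^ 3 = 1 := by rw [← pow_mul, mul_comm, pow_mul, hω, one_pow]
  have k1 := key 1 (one_pow 3)
  have k2 := key ω hω
  have k3 := key (ω^2) hω2
  have e4 : (ω^2)^2 = ω := by
    have : ω^4 = ω := by rw [show (4:ℕ) = 3+1 from rfl, pow_succ, hω, one_mul]
    calc (ω^2)^2 = ω^4 := by ring
      _ = ω := this
  rw [e4] at k3
  have hsum' : 1 + ω^2 + ω = 0 := by linear_combination hsum
  have hv : v = (3:ℂ)⁻¹ • ((v + (1:ℂ)^2 • w + (1:ℂ) • w2) + (v + ω^2 • w + ω • w2)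
      + (v + ω • w + ω^2 • w2)) := by
    have expand : ((v + (1:ℂ)^2 • w + (1:ℂ) • w2) + (v + ω^2 • w + ω • w2)
        + (v + ω • w + ω^2 • w2)) = (3:ℂ) • v + ((1 + ω^2 + ω) • w + (1 + ω + ω^2) • w2) := by
      module
    rw [expand, hsum', hsum]
    match_scalars <;> norm_num
  rw [hv]
  refine Submodule.smul_mem _ _ (Submodule.add_mem _ (Submodule.add_mem _ ?_ ?_) ?_)
  · exact Submodule.mem_iSup_of_mem 0 (by simpa using k1)
  · exact Submodule.mem_iSup_of_mem 1 (by simpa using k2)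
  · exact Submodule.mem_iSup_of_mem 2 (by simpa using k3)

end SL2Aux

/-- If `ρ : SL(2,ℤ) → GL(d,ℂ)` is irreducible with `d ≤ 4` and the eigenvalues of
`ρ(T)` are `e^{2πi r_1}, …, e^{2πi r_d}`, then `d` divides `12(r_1 + ⋯ + r_d)`. -/
theorem dim_dvd_twelve_sum_exponents {d : ℕ} (hd1 : 1 ≤ d) (hd4 : d ≤ 4)
    (ρ : SL(2,ℤ) →* GL (Fin d) ℂ) (hρ : RepIrreducible ρ) (r : Fin d → ℝ)
    (hr : (ρ ModularGroup.T).val.charpoly =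
      ∏ j, (X - C (Complex.exp (2 * Real.pi * Complex.I * (r j))))) :
    ∃ n : ℤ, 12 * ∑ j, r j = (d : ℝ) * (n : ℝ) := by
  classical
  open ModularGroup SL2Aux in
  -- matrices
  set A := (ρ S).val with hAdef
  set B := (ρ (T * S⁻¹)).val with hBdef
  set MT := (ρ T).val with hMTdef
  have hTBA : MT = B * A := by
    rw [hMTdef, hAdef, hBdef, ← coe_rho_mul]
    congr 1
    group
  have hB3 : B * B * B = 1 := by
    have h1 : B * B * B = (ρ ((T * S⁻¹) ^ 3)).val := by
      rw [pow_succ, pow_succ, pow_one, coe_rho_mul, coe_rho_mul, hBdef]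
    rw [h1, R_cube, coe_rho_one]
  -- Schur scalar for ρ(-1)
  obtain ⟨ε, hε1, hMε⟩ : ∃ ε : ℂ, (ε = 1 ∨ ε = -1) ∧ (ρ (-1 : SL(2,ℤ))).val = ε • 1 := by
    rcases schur_neg_one ρ hρ with h | h
    · exact ⟨1, Or.inl rfl, by rw [h, one_smul]⟩
    · exact ⟨-1, Or.inr rfl, by rw [h, neg_smul, one_smul]⟩
  have hε2 : ε ^ 2 = 1 := by rcases hε1 with h | h <;> rw [h] <;> norm_num
  have hA2 : A * A = ε • 1 := by
    rw [hAdef, ← coe_rho_mul, S_sq, hMε]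
  -- square root of ε
  set α : ℂ := if ε = 1 then 1 else I with hαdef
  have hα : α ^ 2 = ε := by
    rw [hαdef]; split_ifs with hif
    · rw [one_pow, hif]
    · rcases hε1 with h | h
      · exact absurd h hif
      · rw [I_sq, h]
  have hα0 : α ≠ 0 := by
    rw [hαdef]; split_ifs <;> simp [I_ne_zero]
  -- cube root of unity
  set ω : ℂ := Complex.exp (2 * Real.pi * I / 3) with hωdef
  have hω3 : ω ^ 3 = 1 := by
    rw [hωdef, ← Complex.exp_nat_mul]
    rw [show (3:ℕ) * (2 * (Real.pi:ℂ) * I / 3) = 2 * Real.pi * I by ring]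
    exact Complex.exp_two_pi_mul_I
  have hω1 : ω ≠ 1 := by
    rw [hωdef]
    intro h
    obtain ⟨n, hn⟩ := Complex.exp_eq_one_iff.mp h
    have hpi : (2 * (Real.pi:ℂ) * I) ≠ 0 := by
      simp [Real.pi_ne_zero, I_ne_zero]
    field_simp at hn
    have h0 : ((1:ℂ) - n*3) * (2 * (Real.pi:ℂ) * I) = 0 := by linear_combination (2 * (Real.pi:ℂ) * I) * hn
    rcases mul_eq_zero.mp h0 with h' | h'
    · have h3 : ((3 * n : ℤ) : ℂ) = 1 := by push_cast; linear_combination -h'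
      have : (3 * n : ℤ) = 1 := by exact_mod_cast h3
      omega
    · exact absurd h' hpi
  have hω0 : ω ≠ 0 := by
    intro h
    rw [h] at hω3
    norm_num at hω3
  have hsum : 1 + ω + ω ^ 2 = 0 := by
    have hfac : (ω - 1) * (ω^2 + ω + 1) = 0 := by linear_combination hω3
    rcases mul_eq_zero.mp hfac with h | h
    · exact (hω1 (sub_eq_zero.mp h)).elim
    · linear_combination h
  -- distinctness of eigenvalue families
  have hω21 : ω ^ 2 ≠ 1 := by
    intro h
    apply hω1
    have h3 : ω ^ 3 = ω := by
      calc ω ^ 3 = ω ^ 2 * ω := by ring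
        _ = 1 * ω := by rw [h]
        _ = ω := one_mul ω
    calc ω = ω ^ 3 := h3.symm
      _ = 1 := hω3
  have hω2ω : ω ^ 2 ≠ ω := by
    intro h
    have h0 : ω * (ω - 1) = 0 := by linear_combination h
    rcases mul_eq_zero.mp h0 with h' | h'
    · exact hω0 h'
    · exact hω1 (sub_eq_zero.mp h')
  have hαinj : Function.Injective ![α, -α] := by
    intro i j hij
    have hαne : α ≠ -α := by
      intro h
      apply hα0
      have : (2:ℂ) * α = 0 := by linear_combination h
      have h2 : (2:ℂ) ≠ 0 := by norm_num
      exact (mul_eq_zero.mp this).resolve_left h2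
    fin_cases i <;> fin_cases j <;>
      [skip; skip; skip; skip] <;>
      first
        | rfl
        | (simp only [Matrix.cons_val_zero, Matrix.cons_val_one, Matrix.head_cons] at hij
           first
             | exact (hαne hij).elim
             | exact (hαne hij.symm).elim)
  have hωinj : Function.Injective ![1, ω, ω^2] := by
    intro i j hij
    fin_cases i <;> fin_cases j <;>
      first
        | rfl
        | (simp only [Matrix.cons_val_zero, Matrix.cons_val_one, Matrix.head_cons,
             Matrix.cons_val_two, Matrix.tail_cons] at hij
           first
             | exact (hω1 hij.symm).elim | exact (hω1 hij).elim
             | exact (hω21 hij.symm).elim | exact (hω21 hij).elim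
             | exact (hω2ω hij.symm).elim | exact (hω2ω hij).elim)
  -- eigenspace decompositions
  have hsupA := SL2Aux.sup_eig_sq A ε α hA2 hα hα0
  have hsupB := SL2Aux.sup_eig_cube B ω hB3 hω3 hsum
  have nsumA : Module.finrank ℂ (Module.End.eigenspace (Matrix.mulVecLin A) α)
      + Module.finrank ℂ (Module.End.eigenspace (Matrix.mulVecLin A) (-α)) = d := by
    have h := SL2Aux.finrank_sum_eig A ![α, -α] hαinj hsupA
    rw [Fin.sum_univ_two] at h; exact h
  have nsumB : Module.finrank ℂ (Module.End.eigenspace (Matrix.mulVecLin B) 1)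
      + Module.finrank ℂ (Module.End.eigenspace (Matrix.mulVecLin B) ω)
      + Module.finrank ℂ (Module.End.eigenspace (Matrix.mulVecLin B) (ω^2)) = d := by
    have h := SL2Aux.finrank_sum_eig B ![1, ω, ω^2] hωinj hsupB
    rw [Fin.sum_univ_three] at h; exact h
  have hdetA := SL2Aux.det_eq_prod_eig A ![α, -α] hαinj hsupA
  have hdetB := SL2Aux.det_eq_prod_eig B ![1, ω, ω^2] hωinj hsupB
  rw [Fin.prod_univ_two] at hdetA
  rw [Fin.prod_univ_three] at hdetB
  simp only [Matrix.cons_val_zero, Matrix.cons_val_one, Matrix.head_cons,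
    Matrix.cons_val_two, Matrix.tail_cons, Matrix.vecHead, Matrix.vecTail, Matrix.cons_val',
    Matrix.cons_val_fin_one, Function.comp_apply, Fin.succ_zero_eq_one] at hdetA hdetB
  -- no common eigenvector bound
  have bound : 2 ≤ d → ∀ μ ν : ℂ,
      Module.finrank ℂ (Module.End.eigenspace (Matrix.mulVecLin A) μ)
      + Module.finrank ℂ (Module.End.eigenspace (Matrix.mulVecLin B) ν) ≤ d := by
    intro hd2 μ ν
    by_contra hlt
    push_neg at hlt
    set U := Module.End.eigenspace (Matrix.mulVecLin A) μ with hU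
    set W := Module.End.eigenspace (Matrix.mulVecLin B) ν with hW
    clear_value U W
    have hsupUW : Module.finrank ℂ ↥(U ⊔ W) ≤ d := by
      have h1 := Submodule.finrank_le (U ⊔ W)
      simpa [Module.finrank_fin_fun] using h1
    have heq := Submodule.finrank_sup_add_finrank_inf_eq U W
    have hpos : 0 < Module.finrank ℂ ↥(U ⊓ W) := by omega
    have : Nontrivial ↥(U ⊓ W) := Module.finrank_pos_iff.mp hpos
    obtain ⟨x, hx0⟩ := exists_ne (0 : ↥(U ⊓ W))
    have hv0 : (x : Fin d → ℂ) ≠ 0 := fun h => hx0 (Subtype.ext h)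
    have hxU : (x : Fin d → ℂ) ∈ Module.End.eigenspace (Matrix.mulVecLin A) μ := by
      rw [← hU]; exact x.2.1
    have hxW : (x : Fin d → ℂ) ∈ Module.End.eigenspace (Matrix.mulVecLin B) ν := by
      rw [← hW]; exact x.2.2
    rw [Module.End.mem_eigenspace_iff] at hxU
    rw [Module.End.mem_eigenspace_iff] at hxW
    simp only [Matrix.mulVecLin_apply] at hxU hxW
    have hd1' := SL2Aux.eig_common ρ hρ x hv0 ⟨μ, hxU⟩ ⟨μ * ν, by
      rw [← hMTdef, hTBA, ← Matrix.mulVec_mulVec, hxU, Matrix.mulVec_smul, hxW,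
        smul_smul]⟩
    omega
  -- determinant relations
  have hdetMT : MT.det = B.det * A.det := by rw [hTBA, det_mul]
  have hdetB3 : B.det ^ 3 = 1 := by
    have h1 : B.det ^ 3 = (B * B * B).det := by rw [det_mul, det_mul]; ring
    rw [h1, hB3, det_one]
  have hdetA2 : A.det ^ 2 = ε ^ d := by
    have h1 : (A * A).det = (ε • (1 : Matrix (Fin d) (Fin d) ℂ)).det := by rw [hA2]
    rw [det_mul, det_smul, det_one, mul_one] at h1
    simpa [sq] using h1
  have hdetA4 : A.det ^ 4 = 1 := by
    have h1 : A.det ^ 4 = (A.det ^ 2) ^ 2 := by ring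
    rw [h1, hdetA2, ← pow_mul, mul_comm, pow_mul, hε2, one_pow]
  -- the key determinant power identity
  have key : ∃ k : ℕ, d * k = 12 ∧ MT.det ^ k = 1 := by
    rcases (show d = 1 ∨ d = 2 ∨ d = 3 ∨ d = 4 by omega) with hD | hD | hD | hD
    · refine ⟨12, by rw [hD], ?_⟩
      have h1 : MT.det ^ 12 = (B.det ^ 3) ^ 4 * (A.det ^ 4) ^ 3 := by
        rw [hdetMT]; ring
      rw [h1, hdetB3, hdetA4, one_pow, one_pow, one_mul]
    · refine ⟨6, by rw [hD], ?_⟩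
      have hε2' : ε ^ d = ε ^ 2 := by rw [hD]
      rw [hε2'] at hdetA2
      have h1 : MT.det ^ 6 = (B.det ^ 3) ^ 2 * (A.det ^ 2) ^ 3 := by
        rw [hdetMT]; ring
      rw [h1, hdetB3, hdetA2, hε2]; norm_num
    · -- d = 3 : det B = 1
      refine ⟨4, by rw [hD], ?_⟩
      have hA2' : 2 ≤ Module.finrank ℂ (Module.End.eigenspace (Matrix.mulVecLin A) α)
          ∨ 2 ≤ Module.finrank ℂ (Module.End.eigenspace (Matrix.mulVecLin A) (-α)) := by
        omega
      have hBle : ∀ ν : ℂ,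
          Module.finrank ℂ (Module.End.eigenspace (Matrix.mulVecLin B) ν) ≤ 1 := by
        intro ν
        rcases hA2' with h | h
        · have := bound (by omega) α ν; omega
        · have := bound (by omega) (-α) ν; omega
      have h1 := hBle 1
      have h2 := hBle ω
      have h3 := hBle (ω^2)
      have e1 : Module.finrank ℂ (Module.End.eigenspace (Matrix.mulVecLin B) 1) = 1 := by omega
      have e2 : Module.finrank ℂ (Module.End.eigenspace (Matrix.mulVecLin B) ω) = 1 := by omega
      have e3 : Module.finrank ℂ (Module.End.eigenspace (Matrix.mulVecLin B) (ω^2)) = 1 := by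
        omega
      erw [e1, e2, e3] at hdetB
      have hdetB1 : B.det = 1 := by
        rw [hdetB]
        have : (1:ℂ) ^ 1 * ω ^ 1 * (ω ^ 2) ^ 1 = ω ^ 3 := by ring
        rw [this, hω3]
      have h4 : MT.det ^ 4 = B.det * (B.det ^ 3) * A.det ^ 4 := by rw [hdetMT]; ring
      rw [h4, hdetB3, hdetB1, hdetA4]; norm_num
    · -- d = 4 : det A = 1
      refine ⟨3, by rw [hD], ?_⟩
      have hB2' : 2 ≤ Module.finrank ℂ (Module.End.eigenspace (Matrix.mulVecLin B) 1)
          ∨ 2 ≤ Module.finrank ℂ (Module.End.eigenspace (Matrix.mulVecLin B) ω)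
          ∨ 2 ≤ Module.finrank ℂ (Module.End.eigenspace (Matrix.mulVecLin B) (ω^2)) := by
        omega
      have hAle : ∀ μ : ℂ,
          Module.finrank ℂ (Module.End.eigenspace (Matrix.mulVecLin A) μ) ≤ 2 := by
        intro μ
        rcases hB2' with h | h | h
        · have := bound (by omega) μ 1; omega
        · have := bound (by omega) μ ω; omega
        · have := bound (by omega) μ (ω^2); omega
      have h1 := hAle α
      have h2 := hAle (-α)
      have e1 : Module.finrank ℂ (Module.End.eigenspace (Matrix.mulVecLin A) α) = 2 := by omega
      have e2 : Module.finrank ℂ (Module.End.eigenspace (Matrix.mulVecLin A) (-α)) = 2 := by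
        omega
      erw [e1, e2] at hdetA
      have hdetA1 : A.det = 1 := by
        rw [hdetA]
        have : α ^ 2 * (-α) ^ 2 = (α ^ 2) ^ 2 := by ring
        rw [this, hα, hε2]
      have h4 : MT.det ^ 3 = B.det ^ 3 * A.det ^ 3 := by rw [hdetMT]; ring
      rw [h4, hdetB3, hdetA1, one_pow, one_mul]
  -- compute det MT from the characteristic polynomial
  obtain ⟨k, hdk, hk⟩ := key
  have hdet_exp : MT.det = Complex.exp (2 * Real.pi * I * ((∑ j, r j : ℝ) : ℂ)) := by
    rw [Matrix.det_eq_sign_charpoly_coeff, hr, coeff_zero_eq_eval_zero, eval_prod]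
    simp only [eval_sub, eval_X, eval_C, zero_sub]
    have h1 : ∀ j : Fin d, -cexp (2 * (Real.pi:ℂ) * I * (r j : ℂ))
        = (-1) * cexp (2 * (Real.pi:ℂ) * I * (r j : ℂ)) := fun j => by ring
    rw [show (fun j : Fin d => -cexp (2 * (Real.pi:ℂ) * I * (r j : ℂ)))
        = fun j : Fin d => (-1) * cexp (2 * (Real.pi:ℂ) * I * (r j : ℂ)) from funext h1]
    rw [Finset.prod_mul_distrib, Finset.prod_const, Finset.card_univ, Fintype.card_fin,
      ← Complex.exp_sum]
    have hmm : ((-1:ℂ)) ^ d * ((-1:ℂ)) ^ d = 1 := by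
      rw [← pow_add, show d + d = 2 * d by ring, pow_mul]
      norm_num
    rw [← mul_assoc, hmm, one_mul]
    congr 1
    rw [← Finset.mul_sum]
    congr 1
    push_cast
    ring
  have hpi : (2 * (Real.pi:ℂ) * I) ≠ 0 := by
    simp [Real.pi_ne_zero, I_ne_zero]
  have hexp : cexp ((k:ℂ) * (2 * Real.pi * I * ((∑ j, r j : ℝ) : ℂ))) = 1 := by
    rw [Complex.exp_nat_mul, ← hdet_exp, hk]
  obtain ⟨m, hm⟩ := Complex.exp_eq_one_iff.mp hexp
  have h0 : ((k:ℂ) * ((∑ j, r j : ℝ) : ℂ) - m) * (2 * Real.pi * I) = 0 := by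
    linear_combination hm
  rcases mul_eq_zero.mp h0 with h' | h'
  · have hre : (k:ℝ) * (∑ j, r j) = (m:ℝ) := by
      have hc : (((k:ℝ) * (∑ j, r j) : ℝ) : ℂ) = ((m:ℝ) : ℂ) := by
        push_cast at h' ⊢
        linear_combination h'
      exact_mod_cast hc
    refine ⟨m, ?_⟩
    have hdk' : (d:ℝ) * (k:ℝ) = 12 := by exact_mod_cast hdk
    calc 12 * ∑ j, r j = ((d:ℝ) * (k:ℝ)) * ∑ j, r j := by rw [hdk']
      _ = (d:ℝ) * ((k:ℝ) * ∑ j, r j) := by ring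
      _ = (d:ℝ) * (m:ℝ) := by rw [hre]
  · exact absurd h' hpi
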